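/- Let q ∈ k× be a non-root of unity over an algebraically closed field k, and A = O_q(k^2) the quantum plane. Then the prime ideals of A are exactly: ⟨0⟩, ⟨x⟩, ⟨y⟩, the ideals ⟨x, y−β⟩ for β ∈ k, and the ideals ⟨x−α, y⟩ for α ∈ k. -/

import Mathlib

/-- The defining relation of the quantum plane: `x * y = q • (y * x)`. -/
inductive QPlaneRel (k : Type*) [CommRing k] (q : k) :
    FreeAlgebra k (Fin 2) → FreeAlgebra k (Fin 2) → Prop
  | rel : QPlaneRel k q (FreeAlgebra.ι k (0 : Fin 2) * FreeAlgebra.ι k (1 : Fin 2))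
      (algebraMap k _ q * (FreeAlgebra.ι k (1 : Fin 2) * FreeAlgebra.ι k (0 : Fin 2)))

/-- The quantum plane `O_q(k²) = k⟨x,y⟩/(xy - qyx)`. -/
abbrev QuantumPlane (k : Type*) [CommRing k] (q : k) := RingQuot (QPlaneRel k q)

/-- The generator `x` of the quantum plane. -/
noncomputable def qpX (k : Type*) [CommRing k] (q : k) : QuantumPlane k q :=
  RingQuot.mkAlgHom k (QPlaneRel k q) (FreeAlgebra.ι k (0 : Fin 2))

/-- The generator `y` of the quantum plane. -/
noncomputable def qpY (k : Type*) [CommRing k] (q : k) : QuantumPlane k q :=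
  RingQuot.mkAlgHom k (QPlaneRel k q) (FreeAlgebra.ι k (1 : Fin 2))

/-- A two-sided ideal `P` of a (possibly noncommutative) ring is prime if it is proper and
`xAy ⊆ P` implies `x ∈ P` or `y ∈ P`. -/
def TwoSidedIdeal.IsPrimeTS {A : Type*} [Ring A] (P : TwoSidedIdeal A) : Prop :=
  P ≠ ⊤ ∧ ∀ x y : A, (∀ r : A, x * r * y ∈ P) → x ∈ P ∨ y ∈ P

namespace QPaux

variable {k : Type*} [CommRing k] {q : k}

/-- Induction principle for the quantum plane. -/
theorem qp_induction {motive : QuantumPlane k q → Prop}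
    (halg : ∀ c : k, motive (algebraMap k _ c))
    (hx : motive (qpX k q)) (hy : motive (qpY k q))
    (hadd : ∀ a b, motive a → motive b → motive (a + b))
    (hmul : ∀ a b, motive a → motive b → motive (a * b)) :
    ∀ a, motive a := by
  intro a
  obtain ⟨b, rfl⟩ := RingQuot.mkAlgHom_surjective k (QPlaneRel k q) a
  induction b using FreeAlgebra.induction with
  | grade0 c => rw [AlgHom.commutes]; exact halg c
  | grade1 i =>
    fin_cases i
    · exact hx
    · exact hy
  | mul a b ha hb => rw [map_mul]; exact hmul _ _ ha hb
  | add a b ha hb => rw [map_add]; exact hadd _ _ ha hb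

/-- Extensionality for algebra maps out of the quantum plane. -/
theorem qp_algHom_ext {B : Type*} [Semiring B] [Algebra k B]
    {f g : QuantumPlane k q →ₐ[k] B} (hfx : f (qpX k q) = g (qpX k q))
    (hfy : f (qpY k q) = g (qpY k q)) : f = g := by
  apply RingQuot.ringQuot_ext'
  apply FreeAlgebra.hom_ext
  funext i
  fin_cases i
  · exact hfx
  · exact hfy

/-- Lifting property. -/
noncomputable def qpLift {B : Type*} [Semiring B] [Algebra k B] (u v : B)
    (h : u * v = algebraMap k B q * (v * u)) : QuantumPlane k q →ₐ[k] B :=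
  RingQuot.liftAlgHom k ⟨FreeAlgebra.lift k ![u, v], by
    rintro _ _ ⟨⟩
    simp only [map_mul, FreeAlgebra.lift_ι_apply, Matrix.cons_val_zero, Matrix.cons_val_one,
      Matrix.head_cons, AlgHom.commutes]
    exact h⟩

@[simp] theorem qpLift_X {B : Type*} [Semiring B] [Algebra k B] (u v : B)
    (h : u * v = algebraMap k B q * (v * u)) : qpLift u v h (qpX k q) = u := by
  simp [qpLift, qpX, RingQuot.liftAlgHom_mkAlgHom_apply]

@[simp] theorem qpLift_Y {B : Type*} [Semiring B] [Algebra k B] (u v : B)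
    (h : u * v = algebraMap k B q * (v * u)) : qpLift u v h (qpY k q) = v := by
  simp [qpLift, qpY, RingQuot.liftAlgHom_mkAlgHom_apply]

theorem qp_rel : qpX k q * qpY k q = q • (qpY k q * qpX k q) := by
  have := RingQuot.mkAlgHom_rel k (QPlaneRel.rel (k := k) (q := q))
  rw [map_mul, map_mul, map_mul, AlgHom.commutes] at this
  rw [qpX, qpY, this, Algebra.smul_def]

end QPaux

namespace QPaux

variable {k : Type*} [CommRing k] {q : k}

/-- The monomial `y^i x^j`. -/
noncomputable def M (q : k) (i j : ℕ) : QuantumPlane k q := qpY k q ^ i * qpX k q ^ j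

theorem X_mul_Ypow (i : ℕ) : qpX k q * qpY k q ^ i = q ^ i • (qpY k q ^ i * qpX k q) := by
  induction i with
  | zero => simp
  | succ n ih =>
    rw [pow_succ, ← mul_assoc, ih, smul_mul_assoc, mul_assoc, qp_rel, mul_smul_comm, smul_smul,
      ← pow_succ, ← mul_assoc]

theorem Xpow_mul_Ypow (j i : ℕ) :
    qpX k q ^ j * qpY k q ^ i = q ^ (j * i) • (qpY k q ^ i * qpX k q ^ j) := by
  induction j with
  | zero => simp
  | succ n ih =>
    rw [pow_succ, mul_assoc, X_mul_Ypow, mul_smul_comm, ← mul_assoc, ih, smul_mul_assoc,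
      smul_smul, mul_assoc, ← pow_succ, ← pow_add]
    ring_nf

theorem M_mul_M (i j a b : ℕ) :
    M q i j * M q a b = q ^ (j * a) • M q (i + a) (j + b) := by
  rw [M, M, M, mul_assoc, ← mul_assoc (qpX k q ^ j), Xpow_mul_Ypow, smul_mul_assoc,
    mul_smul_comm, ← mul_assoc, ← mul_assoc, ← pow_add, mul_assoc, ← pow_add]

@[simp] theorem M_zero_zero : M q 0 0 = 1 := by simp [M]
theorem M_X : M q 0 1 = qpX k q := by simp [M]
theorem M_Y : M q 1 0 = qpY k q := by simp [M]

theorem X_mul_M (i j : ℕ) : qpX k q * M q i j = q ^ i • M q i (j + 1) := by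
  rw [M, ← mul_assoc, X_mul_Ypow, smul_mul_assoc, mul_assoc, ← pow_succ', M]

theorem M_mul_X (i j : ℕ) : M q i j * qpX k q = M q i (j + 1) := by
  rw [M, M, mul_assoc, ← pow_succ]

theorem Y_mul_M (i j : ℕ) : qpY k q * M q i j = M q (i + 1) j := by
  rw [M, M, ← mul_assoc, ← pow_succ']

theorem M_mul_Y (i j : ℕ) : M q i j * qpY k q = q ^ j • M q (i + 1) j := by
  have := M_mul_M (q := q) i j 1 0
  simpa [M_Y, mul_one] using this

end QPaux

namespace QPaux

open Finsupp

variable {k : Type*} [Field k] {q : k}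

/-- The representation space: span of monomials `y^i x^j` indexed by `(i,j)`. -/
abbrev W (k : Type*) [Field k] := (ℕ × ℕ) →₀ k

noncomputable def Xop (q : k) : Module.End k (W k) :=
  Finsupp.lsum k fun p => q ^ p.1 • Finsupp.lsingle (p.1, p.2 + 1)

noncomputable def Yop (k : Type*) [Field k] : Module.End k (W k) :=
  Finsupp.lsum k fun p => Finsupp.lsingle (p.1 + 1, p.2)

@[simp] theorem Xop_single (p : ℕ × ℕ) (c : k) :
    Xop q (single p c) = single (p.1, p.2 + 1) (q ^ p.1 * c) := by
  simp [Xop, Finsupp.smul_single, smul_eq_mul]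

@[simp] theorem Yop_single (p : ℕ × ℕ) (c : k) :
    Yop k (single p c) = single (p.1 + 1, p.2) c := by
  simp [Yop]

theorem XYop_rel : Xop q * Yop k = algebraMap k (Module.End k (W k)) q * (Yop k * Xop q) := by
  apply Finsupp.lhom_ext
  intro p c
  simp only [Module.End.mul_apply, Xop_single, Yop_single, Module.algebraMap_end_apply]
  rw [Finsupp.smul_single]
  congr 1
  rw [smul_eq_mul, ← mul_assoc, ← pow_succ']

/-- The representation of the quantum plane on `W`. -/
noncomputable def rep (q : k) : QuantumPlane k q →ₐ[k] Module.End k (W k) :=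
  qpLift (Xop q) (Yop k) XYop_rel

@[simp] theorem rep_X : rep q (qpX k q) = Xop q := qpLift_X _ _ _
@[simp] theorem rep_Y : rep q (qpY k q) = Yop k := qpLift_Y _ _ _

theorem rep_Xpow_single (j : ℕ) (p : ℕ × ℕ) (c : k) :
    rep q (qpX k q ^ j) (single p c) = single (p.1, j + p.2) (q ^ (j * p.1) * c) := by
  induction j with
  | zero => simp
  | succ n ih =>
    rw [pow_succ', map_mul, Module.End.mul_apply, ih, rep_X, Xop_single]
    congr 1
    · rw [Prod.ext_iff]
      constructor <;> [rfl; omega]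
    · rw [← mul_assoc, ← pow_add]
      congr 2
      ring

theorem rep_M_single (i j : ℕ) (p : ℕ × ℕ) (c : k) :
    rep q (M q i j) (single p c) = single (i + p.1, j + p.2) (q ^ (j * p.1) * c) := by
  rw [M, map_mul, Module.End.mul_apply, rep_Xpow_single]
  induction i with
  | zero => simp
  | succ n ih =>
    rw [pow_succ', map_mul, Module.End.mul_apply, ih, rep_Y, Yop_single]
    congr 2
    omega

/-- The coordinate map. -/
noncomputable def psi (q : k) : QuantumPlane k q →ₗ[k] W k where
  toFun a := rep q a (single (0, 0) 1)
  map_add' a b := by simp [map_add]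
  map_smul' c a := by simp [map_smul]

@[simp] theorem psi_M (i j : ℕ) : psi q (M q i j) = single (i, j) (1 : k) := by
  show rep q (M q i j) (single (0,0) 1) = _
  rw [rep_M_single]
  simp

theorem psi_one : psi q (1 : QuantumPlane k q) = single (0, 0) (1 : k) := by
  rw [← M_zero_zero (q := q), psi_M]

instance : Nontrivial (QuantumPlane k q) := by
  refine ⟨1, 0, fun h => ?_⟩
  have := congrArg (fun a => psi q a (0,0)) h
  simp [psi_one] at this

end QPaux

namespace QPaux

open Finsupp

variable {k : Type*} [Field k] {q : k}

theorem M_linearIndependent :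
    LinearIndependent k (fun p : ℕ × ℕ => M q p.1 p.2) := by
  have h : LinearIndependent k (fun p : ℕ × ℕ => single p (1 : k)) := by
    simpa using Finsupp.basisSingleOne (R := k) (ι := ℕ × ℕ) |>.linearIndependent
  apply LinearIndependent.of_comp (psi q)
  convert h using 1
  funext p
  simp

theorem M_span : ⊤ ≤ Submodule.span k (Set.range fun p : ℕ × ℕ => M q p.1 p.2) := by
  set S := Submodule.span k (Set.range fun p : ℕ × ℕ => M q p.1 p.2) with hS
  have hmem : ∀ i j, M q i j ∈ S := fun i j =>
    Submodule.subset_span ⟨(i, j), rfl⟩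
  have hmulM : ∀ i j, ∀ b ∈ S, M q i j * b ∈ S := by
    intro i j b hb
    induction hb using Submodule.span_induction with
    | mem z hz => obtain ⟨p, rfl⟩ := hz; rw [M_mul_M]; exact S.smul_mem _ (hmem _ _)
    | zero => simpa using S.zero_mem
    | add u v _ _ hu hv => rw [mul_add]; exact S.add_mem hu hv
    | smul c u _ hu => rw [mul_smul_comm]; exact S.smul_mem _ hu
  have hmul : ∀ a ∈ S, ∀ b ∈ S, a * b ∈ S := by
    intro a ha
    induction ha using Submodule.span_induction with
    | mem z hz => obtain ⟨p, rfl⟩ := hz; exact hmulM _ _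
    | zero => intro b _; simpa using S.zero_mem
    | add u v _ _ hu hv => intro b hb; rw [add_mul]; exact S.add_mem (hu b hb) (hv b hb)
    | smul c u _ hu => intro b hb; rw [smul_mul_assoc]; exact S.smul_mem _ (hu b hb)
  intro a ha
  clear ha
  induction a using qp_induction with
  | halg c =>
    rw [Algebra.algebraMap_eq_smul_one, ← M_zero_zero (q := q)]
    exact S.smul_mem _ (hmem 0 0)
  | hx => rw [← M_X]; exact hmem 0 1
  | hy => rw [← M_Y]; exact hmem 1 0
  | hadd a b ha hb => exact S.add_mem ha hb
  | hmul a b ha hb => exact hmul a ha b hb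

/-- The PBW basis of the quantum plane. -/
noncomputable def B (q : k) : Module.Basis (ℕ × ℕ) k (QuantumPlane k q) :=
  Module.Basis.mk M_linearIndependent M_span

theorem B_apply (p : ℕ × ℕ) : B q p = M q p.1 p.2 :=
  Module.Basis.mk_apply M_linearIndependent M_span p

theorem psi_eq_repr : ∀ a : QuantumPlane k q, psi q a = (B q).repr a := by
  have : (psi q) = ((B q).repr : QuantumPlane k q →ₗ[k] (ℕ × ℕ) →₀ k) := by
    apply (B q).ext
    intro p
    have h2 : (B q).repr ((B q) p) = single p 1 := (B q).repr_self p
    simp only [LinearEquiv.coe_coe, B_apply, psi_M]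
    rw [← B_apply, h2]
  intro a; rw [this]; rfl

theorem psi_injective : Function.Injective (psi q) := by
  intro a b h
  rw [psi_eq_repr, psi_eq_repr] at h
  exact (B q).repr.injective h

theorem psi_reconstruct (a : QuantumPlane k q) :
    a = (psi q a).sum fun p c => c • M q p.1 p.2 := by
  conv_lhs => rw [← (B q).linearCombination_repr a]
  rw [Finsupp.linearCombination_apply, ← psi_eq_repr]
  congr 1
  funext p c
  rw [B_apply]

end QPaux

namespace QPaux

open Finsupp

variable {k : Type*} [Field k] {q : k}

theorem eval_sum_single (c : W k) (g : ℕ × ℕ → k → k) (hg : ∀ p, g p 0 = 0) (t : ℕ × ℕ) :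
    (c.sum fun p r => (single p (g p r) : W k)) t = g t (c t) := by
  rw [Finsupp.sum_apply]
  rw [Finsupp.sum]
  simp only [Finsupp.single_apply]
  rw [Finset.sum_ite_eq' c.support t fun p => g p (c p)]
  split_ifs with h
  · rfl
  · rw [Finsupp.notMem_support_iff.mp h, hg]

theorem psi_comb (c : W k) (g : ℕ × ℕ → k → k) :
    psi q (c.sum fun p r => g p r • M q p.1 p.2) = c.sum fun p r => single p (g p r) := by
  rw [map_finsuppSum]
  refine Finsupp.sum_congr fun p _ => ?_
  rw [map_smul, psi_M, smul_single, smul_eq_mul, mul_one]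

set_option maxHeartbeats 1000000 in
theorem exists_top (s : Finset (ℕ × ℕ)) (hs : s.Nonempty) :
    ∃ m ∈ s, ∀ p ∈ s, p.1 ≤ m.1 ∧ (p.1 = m.1 → p.2 ≤ m.2) := by
  have h1 : (s.image Prod.fst).Nonempty := hs.image _
  set i := (s.image Prod.fst).max' h1 with hi
  have himem : i ∈ s.image Prod.fst := (s.image Prod.fst).max'_mem h1
  obtain ⟨p0, hp0, hp0i⟩ := Finset.mem_image.mp himem
  have h2 : ((s.filter (fun p => p.1 = i)).image Prod.snd).Nonempty :=
    ⟨p0.2, Finset.mem_image.mpr ⟨p0, Finset.mem_filter.mpr ⟨hp0, hp0i⟩, rfl⟩⟩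
  set j := ((s.filter (fun p => p.1 = i)).image Prod.snd).max' h2 with hj
  have hjmem := ((s.filter (fun p => p.1 = i)).image Prod.snd).max'_mem h2
  obtain ⟨p1, hp1, hp1j⟩ := Finset.mem_image.mp hjmem
  obtain ⟨hp1s, hp1i⟩ := Finset.mem_filter.mp hp1
  refine ⟨(i, j), ?_, ?_⟩
  · have : p1 = (i, j) := Prod.ext hp1i hp1j
    rwa [← this]
  · intro p hp
    constructor
    · exact Finset.le_max' _ _ (Finset.mem_image.mpr ⟨p, hp, rfl⟩)
    · intro hpi
      exact Finset.le_max' _ _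
        (Finset.mem_image.mpr ⟨p, Finset.mem_filter.mpr ⟨hp, hpi⟩, rfl⟩)

theorem psi_mul (a b : QuantumPlane k q) :
    psi q (a * b) = (psi q a).sum fun p cp => (psi q b).sum fun u du =>
      (single (p.1 + u.1, p.2 + u.2) (cp * du * q ^ (p.2 * u.1)) : W k) := by
  conv_lhs => rw [psi_reconstruct a, psi_reconstruct b]
  rw [Finsupp.sum_mul, map_finsuppSum]
  refine Finsupp.sum_congr fun p _ => ?_
  rw [smul_mul_assoc, Finsupp.mul_sum, map_smul, map_finsuppSum, Finsupp.smul_sum]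
  refine Finsupp.sum_congr fun u _ => ?_
  rw [mul_smul_comm, M_mul_M, map_smul, map_smul, psi_M, smul_single, smul_single, smul_single]
  simp only [smul_eq_mul, mul_one]
  ring_nf

theorem support_nonempty_of_ne_zero {a : QuantumPlane k q} (ha : a ≠ 0) :
    (psi q a).support.Nonempty := by
  rw [Finsupp.support_nonempty_iff]
  intro h
  exact ha (psi_injective (by rw [h, map_zero]))

theorem qp_mul_ne_zero (hq0 : q ≠ 0) {a b : QuantumPlane k q} (ha : a ≠ 0) (hb : b ≠ 0) :
    a * b ≠ 0 := by
  obtain ⟨m, hm, hmax⟩ := exists_top _ (support_nonempty_of_ne_zero ha)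
  obtain ⟨n, hn, hnax⟩ := exists_top _ (support_nonempty_of_ne_zero hb)
  intro hab
  have h0 : psi q (a * b) (m.1 + n.1, m.2 + n.2) = 0 := by rw [hab, map_zero]; rfl
  rw [psi_mul] at h0
  rw [Finsupp.sum, Finset.sum_apply'] at h0
  rw [Finset.sum_eq_single_of_mem m hm] at h0
  · rw [Finsupp.sum, Finset.sum_apply'] at h0
    rw [Finset.sum_eq_single_of_mem n hn] at h0
    · rw [Finsupp.single_eq_same] at h0
      rcases mul_eq_zero.mp h0 with h | h
      · rcases mul_eq_zero.mp h with h' | h'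
        · exact Finsupp.mem_support_iff.mp hm h'
        · exact Finsupp.mem_support_iff.mp hn h'
      · exact pow_ne_zero _ hq0 h
    · intro u hu hune
      obtain ⟨h1, h2⟩ := hnax u hu
      rw [Finsupp.single_apply, if_neg]
      intro hc
      apply hune
      obtain ⟨hc1, hc2⟩ := Prod.mk.injEq _ _ _ _ ▸ hc
      have e1 : u.1 = n.1 := by omega
      have e2 : u.2 = n.2 := by
        have := h2 e1
        omega
      exact Prod.ext e1 e2
  · intro p hp hpne
    rw [Finsupp.sum_apply, Finsupp.sum]
    apply Finset.sum_eq_zero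
    intro u hu
    obtain ⟨h1, h2⟩ := hmax p hp
    obtain ⟨h3, h4⟩ := hnax u hu
    rw [Finsupp.single_apply, if_neg]
    intro hc
    apply hpne
    obtain ⟨hc1, hc2⟩ := Prod.mk.injEq _ _ _ _ ▸ hc
    have e1 : p.1 = m.1 := by omega
    have e2 : p.2 = m.2 := by
      have := h2 e1
      have e1' : u.1 = n.1 := by omega
      have := h4 e1'
      omega
    exact Prod.ext e1 e2

end QPaux

namespace QPaux

open Finsupp TwoSidedIdeal

variable {k : Type*} [Field k] {q : k}

/-- Projection killing `x`. -/
noncomputable def piY (q : k) : QuantumPlane k q →ₐ[k] Polynomial k :=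
  qpLift 0 Polynomial.X (by simp)

/-- Projection killing `y`. -/
noncomputable def piX (q : k) : QuantumPlane k q →ₐ[k] Polynomial k :=
  qpLift Polynomial.X 0 (by simp)

/-- Evaluation at `(0, β)`. -/
noncomputable def epsB (q β : k) : QuantumPlane k q →ₐ[k] k :=
  qpLift 0 β (by simp)

/-- Evaluation at `(α, 0)`. -/
noncomputable def epsA (q α : k) : QuantumPlane k q →ₐ[k] k :=
  qpLift α 0 (by simp)

theorem piY_aeval (f : Polynomial k) : piY q (Polynomial.aeval (qpY k q) f) = f := by
  have : (piY q).comp (Polynomial.aeval (qpY k q)) = Polynomial.aeval Polynomial.X := by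
    apply Polynomial.algHom_ext
    simp [piY]
  calc piY q (Polynomial.aeval (qpY k q) f)
      = ((piY q).comp (Polynomial.aeval (qpY k q))) f := rfl
    _ = Polynomial.aeval Polynomial.X f := by rw [this]
    _ = f := by simp

theorem piX_aeval (f : Polynomial k) : piX q (Polynomial.aeval (qpX k q) f) = f := by
  have : (piX q).comp (Polynomial.aeval (qpX k q)) = Polynomial.aeval Polynomial.X := by
    apply Polynomial.algHom_ext
    simp [piX]
  calc piX q (Polynomial.aeval (qpX k q) f)
      = ((piX q).comp (Polynomial.aeval (qpX k q))) f := rfl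
    _ = Polynomial.aeval Polynomial.X f := by rw [this]
    _ = f := by simp

theorem span_mem_of_subset {R : Type*} [Ring R] {s : Set R} {I : TwoSidedIdeal R}
    (h : s ⊆ I) {a : R} (ha : a ∈ span s) : a ∈ I :=
  mem_span_iff.mp ha I h

/-- Generic: `a - s (f a)` lies in the span, for a hom `f` and a section-like map `s`. -/
theorem sub_section_mem {B : Type*} [CommRing B] [Algebra k B]
    (f : QuantumPlane k q →ₐ[k] B) (s : B →ₐ[k] QuantumPlane k q) (G : Set (QuantumPlane k q))
    (hX : qpX k q - s (f (qpX k q)) ∈ span G)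
    (hY : qpY k q - s (f (qpY k q)) ∈ span G) :
    ∀ a, a - s (f a) ∈ span G := by
  intro a
  induction a using qp_induction with
  | halg c => rw [AlgHom.commutes, AlgHom.commutes, sub_self]; exact (span G).zero_mem
  | hx => exact hX
  | hy => exact hY
  | hadd a b ha hb =>
    rw [map_add, map_add, ← sub_add_sub_comm]
    exact (span G).add_mem ha hb
  | hmul a b ha hb =>
    rw [map_mul, map_mul]
    have h : a * b - s (f a) * s (f b)
        = a * (b - s (f b)) + (a - s (f a)) * s (f b) := by
      rw [mul_sub, sub_mul, sub_add_sub_cancel]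
    rw [h]
    exact (span G).add_mem ((span G).mul_mem_left _ _ hb) ((span G).mul_mem_right _ _ ha)

theorem sub_piY_mem (a : QuantumPlane k q) :
    a - Polynomial.aeval (qpY k q) (piY q a) ∈ span {qpX k q} := by
  refine sub_section_mem (piY q) (Polynomial.aeval (qpY k q)) {qpX k q} ?_ ?_ a
  · have h : piY q (qpX k q) = 0 := qpLift_X _ _ _
    rw [h, map_zero, sub_zero]
    exact subset_span rfl
  · have h : piY q (qpY k q) = Polynomial.X := qpLift_Y _ _ _
    rw [h, Polynomial.aeval_X, sub_self]
    exact (span _).zero_mem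

theorem sub_piX_mem (a : QuantumPlane k q) :
    a - Polynomial.aeval (qpX k q) (piX q a) ∈ span {qpY k q} := by
  refine sub_section_mem (piX q) (Polynomial.aeval (qpX k q)) {qpY k q} ?_ ?_ a
  · have h : piX q (qpX k q) = Polynomial.X := qpLift_X _ _ _
    rw [h, Polynomial.aeval_X, sub_self]
    exact (span _).zero_mem
  · have h : piX q (qpY k q) = 0 := qpLift_Y _ _ _
    rw [h, map_zero, sub_zero]
    exact subset_span rfl

theorem mem_span_X_iff (a : QuantumPlane k q) :
    a ∈ span {qpX k q} ↔ piY q a = 0 := by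
  constructor
  · intro ha
    refine (mem_ker (piY q)).mp (span_mem_of_subset ?_ ha)
    intro z hz
    rw [Set.mem_singleton_iff] at hz
    subst hz
    rw [SetLike.mem_coe, mem_ker]
    exact qpLift_X _ _ _
  · intro h
    have := sub_piY_mem a
    rwa [h, map_zero, sub_zero] at this

theorem mem_span_Y_iff (a : QuantumPlane k q) :
    a ∈ span {qpY k q} ↔ piX q a = 0 := by
  constructor
  · intro ha
    refine (mem_ker (piX q)).mp (span_mem_of_subset ?_ ha)
    intro z hz
    rw [Set.mem_singleton_iff] at hz
    subst hz
    rw [SetLike.mem_coe, mem_ker]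
    exact qpLift_Y _ _ _
  · intro h
    have := sub_piX_mem a
    rwa [h, map_zero, sub_zero] at this

theorem mem_span_XB_iff (β : k) (a : QuantumPlane k q) :
    a ∈ span {qpX k q, qpY k q - algebraMap k (QuantumPlane k q) β} ↔ epsB q β a = 0 := by
  constructor
  · intro ha
    refine (mem_ker (epsB q β)).mp (span_mem_of_subset ?_ ha)
    rintro z (hz | hz)
    · subst hz
      rw [SetLike.mem_coe, mem_ker]
      exact qpLift_X _ _ _
    · rw [Set.mem_singleton_iff] at hz
      subst hz
      rw [SetLike.mem_coe, mem_ker, map_sub, AlgHom.commutes]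
      have h : epsB q β (qpY k q) = β := qpLift_Y _ _ _
      rw [h]
      simp
  · intro h
    have key := sub_section_mem (epsB q β) (Algebra.ofId k _)
      {qpX k q, qpY k q - algebraMap k (QuantumPlane k q) β} ?_ ?_ a
    · rwa [h, map_zero, sub_zero] at key
    · have h1 : epsB q β (qpX k q) = 0 := qpLift_X _ _ _
      rw [h1, map_zero, sub_zero]
      exact subset_span (Set.mem_insert _ _)
    · have h1 : epsB q β (qpY k q) = β := qpLift_Y _ _ _
      rw [h1, Algebra.ofId_apply]
      exact subset_span (Set.mem_insert_iff.mpr (Or.inr rfl))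

theorem mem_span_AY_iff (α : k) (a : QuantumPlane k q) :
    a ∈ span {qpX k q - algebraMap k (QuantumPlane k q) α, qpY k q} ↔ epsA q α a = 0 := by
  constructor
  · intro ha
    refine (mem_ker (epsA q α)).mp (span_mem_of_subset ?_ ha)
    rintro z (hz | hz)
    · subst hz
      rw [SetLike.mem_coe, mem_ker, map_sub, AlgHom.commutes]
      have h : epsA q α (qpX k q) = α := qpLift_X _ _ _
      rw [h]
      simp
    · rw [Set.mem_singleton_iff] at hz
      subst hz
      rw [SetLike.mem_coe, mem_ker]
      exact qpLift_Y _ _ _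
  · intro h
    have key := sub_section_mem (epsA q α) (Algebra.ofId k _)
      {qpX k q - algebraMap k (QuantumPlane k q) α, qpY k q} ?_ ?_ a
    · rwa [h, map_zero, sub_zero] at key
    · have h1 : epsA q α (qpX k q) = α := qpLift_X _ _ _
      rw [h1, Algebra.ofId_apply]
      exact subset_span (Set.mem_insert _ _)
    · have h1 : epsA q α (qpY k q) = 0 := qpLift_Y _ _ _
      rw [h1, map_zero, sub_zero]
      exact subset_span (Set.mem_insert_iff.mpr (Or.inr rfl))

end QPaux

namespace QPaux

open TwoSidedIdeal

variable {k : Type*} [Field k] {q : k}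

theorem isPrime_of_hom {B : Type*} [CommRing B] [IsDomain B] [Algebra k B]
    (f : QuantumPlane k q →ₐ[k] B) (P : TwoSidedIdeal (QuantumPlane k q))
    (hmem : ∀ a, a ∈ P ↔ f a = 0) : P.IsPrimeTS := by
  constructor
  · intro htop
    have : (1 : QuantumPlane k q) ∈ P := htop ▸ trivial
    rw [hmem, map_one] at this
    exact one_ne_zero this
  · intro a b h
    have := h 1
    rw [mul_one, hmem, map_mul] at this
    rcases mul_eq_zero.mp this with h' | h'
    · exact Or.inl ((hmem a).mpr h')
    · exact Or.inr ((hmem b).mpr h')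

theorem isPrime_bot (hq0 : q ≠ 0) :
    (⊥ : TwoSidedIdeal (QuantumPlane k q)).IsPrimeTS := by
  constructor
  · intro htop
    have : (1 : QuantumPlane k q) ∈ (⊥ : TwoSidedIdeal (QuantumPlane k q)) := htop ▸ trivial
    rw [mem_bot] at this
    exact one_ne_zero this
  · intro a b h
    have h1 := h 1
    rw [mul_one, mem_bot] at h1
    by_contra hcon
    push_neg at hcon
    obtain ⟨ha, hb⟩ := hcon
    rw [mem_bot] at ha hb
    exact qp_mul_ne_zero hq0 ha hb h1

theorem isPrime_span_X : (span {qpX k q}).IsPrimeTS :=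
  isPrime_of_hom (piY q) _ mem_span_X_iff

theorem isPrime_span_Y : (span {qpY k q}).IsPrimeTS :=
  isPrime_of_hom (piX q) _ mem_span_Y_iff

theorem isPrime_span_XB (β : k) :
    (span {qpX k q, qpY k q - algebraMap k (QuantumPlane k q) β}).IsPrimeTS :=
  isPrime_of_hom (epsB q β) _ (mem_span_XB_iff β)

theorem isPrime_span_AY (α : k) :
    (span {qpX k q - algebraMap k (QuantumPlane k q) α, qpY k q}).IsPrimeTS :=
  isPrime_of_hom (epsA q α) _ (mem_span_AY_iff α)

end QPaux

namespace QPaux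

open Finsupp TwoSidedIdeal

variable {k : Type*} [Field k] {q : k}

/-- The twist automorphism with `r * x = x * τ r`. -/
noncomputable def tau (hq0 : q ≠ 0) : QuantumPlane k q →ₐ[k] QuantumPlane k q :=
  qpLift (qpX k q) (q⁻¹ • qpY k q) (by
    rw [mul_smul_comm, qp_rel, smul_smul, inv_mul_cancel₀ hq0, one_smul,
      smul_mul_assoc, ← Algebra.smul_def, smul_smul, mul_inv_cancel₀ hq0, one_smul])

theorem mul_X_eq (hq0 : q ≠ 0) : ∀ r : QuantumPlane k q,
    r * qpX k q = qpX k q * tau hq0 r := by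
  intro r
  induction r using qp_induction with
  | halg c =>
    rw [AlgHom.commutes]
    exact Algebra.commutes c _
  | hx => rw [tau, qpLift_X]
  | hy =>
    rw [tau, qpLift_Y, mul_smul_comm, qp_rel, smul_smul, inv_mul_cancel₀ hq0, one_smul]
  | hadd a b ha hb => rw [add_mul, ha, hb, map_add, mul_add]
  | hmul a b ha hb => rw [mul_assoc, hb, ← mul_assoc, ha, mul_assoc, map_mul]

/-- The twist automorphism with `y * r = σ r * y`. -/
noncomputable def sigl (hq0 : q ≠ 0) : QuantumPlane k q →ₐ[k] QuantumPlane k q :=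
  qpLift (q⁻¹ • qpX k q) (qpY k q) (by
    rw [smul_mul_assoc, qp_rel, smul_smul, inv_mul_cancel₀ hq0, one_smul,
      mul_smul_comm, ← Algebra.smul_def, smul_smul, mul_inv_cancel₀ hq0, one_smul])

theorem Y_mul_eq (hq0 : q ≠ 0) : ∀ r : QuantumPlane k q,
    qpY k q * r = sigl hq0 r * qpY k q := by
  intro r
  induction r using qp_induction with
  | halg c =>
    rw [AlgHom.commutes]
    exact (Algebra.commutes c _).symm
  | hx =>
    rw [sigl, qpLift_X, smul_mul_assoc, qp_rel, smul_smul, inv_mul_cancel₀ hq0, one_smul]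
  | hy => rw [sigl, qpLift_Y]
  | hadd a b ha hb => rw [mul_add, ha, hb, map_add, add_mul]
  | hmul a b ha hb => rw [← mul_assoc, ha, mul_assoc, hb, ← mul_assoc, map_mul]

theorem strip_X {P : TwoSidedIdeal (QuantumPlane k q)} (hP : P.IsPrimeTS) (hq0 : q ≠ 0)
    (hx : qpX k q ∉ P) {b : QuantumPlane k q} (h : b * qpX k q ∈ P) : b ∈ P := by
  refine (hP.2 b (qpX k q) fun r => ?_).resolve_right hx
  rw [mul_assoc, mul_X_eq hq0 r, ← mul_assoc]
  exact P.mul_mem_right _ _ h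

theorem strip_Y {P : TwoSidedIdeal (QuantumPlane k q)} (hP : P.IsPrimeTS) (hq0 : q ≠ 0)
    (hy : qpY k q ∉ P) {b : QuantumPlane k q} (h : qpY k q * b ∈ P) : b ∈ P := by
  refine (hP.2 (qpY k q) b fun r => ?_).resolve_left hy
  rw [Y_mul_eq hq0 r, mul_assoc]
  exact P.mul_mem_left _ _ h

theorem Xpow_not_mem {P : TwoSidedIdeal (QuantumPlane k q)} (hP : P.IsPrimeTS) (hq0 : q ≠ 0)
    (hx : qpX k q ∉ P) : ∀ j : ℕ, qpX k q ^ j ∉ P := by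
  intro j
  induction j with
  | zero =>
    intro h
    rw [pow_zero] at h
    exact hP.1 (TwoSidedIdeal.one_mem_iff P |>.mp h)
  | succ n ih =>
    intro h
    rw [pow_succ] at h
    exact ih (strip_X hP hq0 hx h)

theorem M_not_mem {P : TwoSidedIdeal (QuantumPlane k q)} (hP : P.IsPrimeTS) (hq0 : q ≠ 0)
    (hx : qpX k q ∉ P) (hy : qpY k q ∉ P) (i j : ℕ) : M q i j ∉ P := by
  induction i with
  | zero =>
    intro h
    rw [M, pow_zero, one_mul] at h
    exact Xpow_not_mem hP hq0 hx j h
  | succ n ih =>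
    intro h
    rw [M, pow_succ', mul_assoc] at h
    exact ih (strip_Y hP hq0 hy h)

theorem qpow_injective (hq0 : q ≠ 0) (hq : ∀ n : ℕ, 0 < n → q ^ n ≠ 1)
    {i j : ℕ} (h : q ^ i = q ^ j) : i = j := by
  by_contra hne
  wlog hij : i < j generalizing i j
  · exact this h.symm (Ne.symm hne) (by omega)
  apply hq (j - i) (by omega)
  have h2 : q ^ i * q ^ (j - i) = q ^ i * 1 := by
    rw [← pow_add, mul_one, show i + (j - i) = j from by omega, ← h]
  exact mul_left_cancel₀ (pow_ne_zero _ hq0) h2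

end QPaux

namespace QPaux

open Finsupp TwoSidedIdeal

variable {k : Type*} [Field k] {q : k}

theorem smul_mem' {P : TwoSidedIdeal (QuantumPlane k q)} (c : k) {a : QuantumPlane k q}
    (ha : a ∈ P) : c • a ∈ P := by
  rw [Algebra.smul_def]
  exact P.mul_mem_left _ _ ha

theorem eq_bot_of_not_mem {P : TwoSidedIdeal (QuantumPlane k q)} (hP : P.IsPrimeTS)
    (hq0 : q ≠ 0) (hq : ∀ n : ℕ, 0 < n → q ^ n ≠ 1)
    (hx : qpX k q ∉ P) (hy : qpY k q ∉ P) : P = ⊥ := by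
  have key : ∀ n : ℕ, ∀ a ∈ P, (psi q a).support.card = n → a = 0 := by
    intro n
    induction n using Nat.strong_induction_on with
    | _ n IH =>
    intro a haP hcard
    by_contra h0
    obtain ⟨p0, hp0⟩ := support_nonempty_of_ne_zero h0
    set c := psi q a with hc
    have hrec : a = c.sum fun p r => r • M q p.1 p.2 := psi_reconstruct a
    have redX : ∀ p1 ∈ c.support, p1.1 = p0.1 := by
      by_contra hcon
      push_neg at hcon
      obtain ⟨p1, hp1, hp1ne⟩ := hcon
      set d := c.sum (fun p r => ((q ^ p.1 - q ^ p0.1) * r) • M q p.1 p.2) with hd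
      have hXa : qpX k q * a = c.sum fun p r => (q ^ p.1 * r) • M q p.1 (p.2 + 1) := by
        conv_lhs => rw [hrec]
        rw [Finsupp.mul_sum]
        refine Finsupp.sum_congr fun p _ => ?_
        rw [mul_smul_comm, X_mul_M, smul_smul, mul_comm]
      have haX : a * qpX k q = c.sum fun p r => r • M q p.1 (p.2 + 1) := by
        conv_lhs => rw [hrec]
        rw [Finsupp.sum_mul]
        refine Finsupp.sum_congr fun p _ => ?_
        rw [smul_mul_assoc, M_mul_X]
      have hdX : d * qpX k q = c.sum fun p r => ((q ^ p.1 - q ^ p0.1) * r) • M q p.1 (p.2 + 1) := by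
        rw [hd, Finsupp.sum_mul]
        refine Finsupp.sum_congr fun p _ => ?_
        rw [smul_mul_assoc, M_mul_X]
      have hcomb : d * qpX k q = qpX k q * a - q ^ p0.1 • (a * qpX k q) := by
        rw [hXa, haX, hdX, Finsupp.smul_sum, ← Finsupp.sum_sub]
        refine Finsupp.sum_congr fun p _ => ?_
        rw [smul_smul, sub_mul]
        module
      have hdP : d ∈ P := by
        refine strip_X hP hq0 hx ?_
        rw [hcomb]
        exact P.sub_mem (P.mul_mem_left _ _ haP)
          (smul_mem' _ (P.mul_mem_right _ _ haP))
      have hpsid : ∀ t, psi q d t = (q ^ t.1 - q ^ p0.1) * c t := by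
        intro t
        rw [hd, psi_comb c (fun p r => (q ^ p.1 - q ^ p0.1) * r),
          eval_sum_single c _ (fun p => mul_zero _) t]
      have hsub : (psi q d).support ⊆ c.support := by
        intro t ht
        rw [Finsupp.mem_support_iff] at ht ⊢
        intro hct
        exact ht (by rw [hpsid, hct, mul_zero])
      have hnotin : p0 ∉ (psi q d).support := by
        rw [Finsupp.mem_support_iff]
        push_neg
        rw [hpsid, sub_self, zero_mul]
      have hlt : (psi q d).support.card < n :=
        hcard ▸ Finset.card_lt_card ((Finset.ssubset_iff_of_subset hsub).mpr ⟨p0, hp0, hnotin⟩)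
      have hd0 : d = 0 := IH _ hlt d hdP rfl
      have : (0 : k) = (q ^ p1.1 - q ^ p0.1) * c p1 := by
        rw [← hpsid p1, hd0, map_zero]
        rfl
      rcases mul_eq_zero.mp this.symm with h' | h'
      · exact hp1ne (qpow_injective hq0 hq (sub_eq_zero.mp h'))
      · exact Finsupp.mem_support_iff.mp hp1 h'
    have redY : ∀ p1 ∈ c.support, p1.2 = p0.2 := by
      by_contra hcon
      push_neg at hcon
      obtain ⟨p1, hp1, hp1ne⟩ := hcon
      set d := c.sum (fun p r => ((q ^ p.2 - q ^ p0.2) * r) • M q p.1 p.2) with hd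
      have haY : a * qpY k q = c.sum fun p r => (q ^ p.2 * r) • M q (p.1 + 1) p.2 := by
        conv_lhs => rw [hrec]
        rw [Finsupp.sum_mul]
        refine Finsupp.sum_congr fun p _ => ?_
        rw [smul_mul_assoc, M_mul_Y, smul_smul, mul_comm]
      have hYa : qpY k q * a = c.sum fun p r => r • M q (p.1 + 1) p.2 := by
        conv_lhs => rw [hrec]
        rw [Finsupp.mul_sum]
        refine Finsupp.sum_congr fun p _ => ?_
        rw [mul_smul_comm, Y_mul_M]
      have hYd : qpY k q * d = c.sum fun p r => ((q ^ p.2 - q ^ p0.2) * r) • M q (p.1 + 1) p.2 := by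
        rw [hd, Finsupp.mul_sum]
        refine Finsupp.sum_congr fun p _ => ?_
        rw [mul_smul_comm, Y_mul_M]
      have hcomb : qpY k q * d = a * qpY k q - q ^ p0.2 • (qpY k q * a) := by
        rw [haY, hYa, hYd, Finsupp.smul_sum, ← Finsupp.sum_sub]
        refine Finsupp.sum_congr fun p _ => ?_
        rw [smul_smul, sub_mul]
        module
      have hdP : d ∈ P := by
        refine strip_Y hP hq0 hy ?_
        rw [hcomb]
        exact P.sub_mem (P.mul_mem_right _ _ haP)
          (smul_mem' _ (P.mul_mem_left _ _ haP))
      have hpsid : ∀ t, psi q d t = (q ^ t.2 - q ^ p0.2) * c t := by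
        intro t
        rw [hd, psi_comb c (fun p r => (q ^ p.2 - q ^ p0.2) * r),
          eval_sum_single c _ (fun p => mul_zero _) t]
      have hsub : (psi q d).support ⊆ c.support := by
        intro t ht
        rw [Finsupp.mem_support_iff] at ht ⊢
        intro hct
        exact ht (by rw [hpsid, hct, mul_zero])
      have hnotin : p0 ∉ (psi q d).support := by
        rw [Finsupp.mem_support_iff]
        push_neg
        rw [hpsid, sub_self, zero_mul]
      have hlt : (psi q d).support.card < n :=
        hcard ▸ Finset.card_lt_card ((Finset.ssubset_iff_of_subset hsub).mpr ⟨p0, hp0, hnotin⟩)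
      have hd0 : d = 0 := IH _ hlt d hdP rfl
      have : (0 : k) = (q ^ p1.2 - q ^ p0.2) * c p1 := by
        rw [← hpsid p1, hd0, map_zero]
        rfl
      rcases mul_eq_zero.mp this.symm with h' | h'
      · exact hp1ne (qpow_injective hq0 hq (sub_eq_zero.mp h'))
      · exact Finsupp.mem_support_iff.mp hp1 h'
    have hsupp : c.support = {p0} :=
      Finset.eq_singleton_iff_unique_mem.mpr
        ⟨hp0, fun p hp => Prod.ext (redX p hp) (redY p hp)⟩
    have ha2 : a = c p0 • M q p0.1 p0.2 := by
      conv_lhs => rw [hrec]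
      rw [Finsupp.sum, hsupp, Finset.sum_singleton]
    have hMmem : M q p0.1 p0.2 ∈ P := by
      have h1 : (c p0)⁻¹ • a ∈ P := smul_mem' _ haP
      rw [ha2, smul_smul, inv_mul_cancel₀ (Finsupp.mem_support_iff.mp hp0), one_smul] at h1
      exact h1
    exact M_not_mem hP hq0 hx hy p0.1 p0.2 hMmem
  rw [eq_bot_iff]
  intro a ha
  exact (mem_bot (R := QuantumPlane k q)).mpr (key _ a ha rfl)

end QPaux

namespace QPaux

open TwoSidedIdeal Polynomial

variable {k : Type*} [Field k] {q : k}

theorem classify_poly_prime [IsAlgClosed k] (J : Ideal (Polynomial k)) (hJ : J.IsPrime) :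
    J = ⊥ ∨ ∃ β : k, J = Ideal.span {Polynomial.X - Polynomial.C β} := by
  by_cases hbot : J = ⊥
  · exact Or.inl hbot
  right
  obtain ⟨g, hg⟩ := (IsPrincipalIdealRing.principal J).principal
  rw [Ideal.submodule_span_eq] at hg
  have hg0 : g ≠ 0 := by
    rintro rfl
    apply hbot
    rw [hg, Ideal.span_singleton_eq_bot]
  have hgprime : Prime g := (Ideal.span_singleton_prime hg0).mp (hg ▸ hJ)
  have hirr : Irreducible g := hgprime.irreducible
  have hdeg : g.degree = 1 := IsAlgClosed.degree_eq_one_of_irreducible k hirr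
  have hnat : g.natDegree = 1 := natDegree_eq_of_degree_eq_some hdeg
  have ha : g.coeff 1 ≠ 0 := by
    have h1 : g.leadingCoeff ≠ 0 := leadingCoeff_ne_zero.mpr hg0
    rwa [Polynomial.leadingCoeff, hnat] at h1
  set a := g.coeff 1
  set b := g.coeff 0
  have hform : g = C a * Polynomial.X + C b :=
    eq_X_add_C_of_degree_le_one (by rw [hdeg])
  refine ⟨-(b / a), ?_⟩
  rw [hg]
  have hassoc : Associated (Polynomial.X - C (-(b / a))) g := by
    refine ⟨(Polynomial.isUnit_C.mpr (isUnit_iff_ne_zero.mpr ha)).unit, ?_⟩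
    show (Polynomial.X - C (-(b / a))) * C a = g
    rw [hform, sub_mul, ← C_mul, show -(b / a) * a = -b from by field_simp, C_neg,
      sub_neg_eq_add, mul_comm Polynomial.X (C a)]
  exact Ideal.span_singleton_eq_span_singleton.mpr hassoc.symm

end QPaux

namespace QPaux

open TwoSidedIdeal Polynomial

variable {k : Type*} [Field k] {q : k}

theorem case_X_mem [IsAlgClosed k] {P : TwoSidedIdeal (QuantumPlane k q)} (hP : P.IsPrimeTS)
    (hxP : qpX k q ∈ P) :
    P = span {qpX k q} ∨
      ∃ β : k, P = span {qpX k q, qpY k q - algebraMap k (QuantumPlane k q) β} := by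
  have hXle : ∀ a, a ∈ span ({qpX k q} : Set (QuantumPlane k q)) → a ∈ P := by
    intro a ha
    refine span_mem_of_subset ?_ ha
    intro z hz
    rw [Set.mem_singleton_iff] at hz
    subst hz
    exact hxP
  have hmemiff : ∀ a : QuantumPlane k q,
      a ∈ P ↔ Polynomial.aeval (qpY k q) (piY q a) ∈ P := by
    intro a
    have hsub := sub_piY_mem (q := q) a
    constructor
    · intro ha
      have : Polynomial.aeval (qpY k q) (piY q a)
          = a - (a - Polynomial.aeval (qpY k q) (piY q a)) := by abel
      rw [this]
      exact P.sub_mem ha (hXle _ hsub)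
    · intro ha
      have : a = (a - Polynomial.aeval (qpY k q) (piY q a))
          + Polynomial.aeval (qpY k q) (piY q a) := by abel
      rw [this]
      exact P.add_mem (hXle _ hsub) ha
  set J : Ideal (Polynomial k) :=
    { carrier := {f | Polynomial.aeval (qpY k q) f ∈ P}
      zero_mem' := by simp only [Set.mem_setOf_eq, map_zero]; exact P.zero_mem
      add_mem' := fun hf hg => by
        simp only [Set.mem_setOf_eq, map_add] at *
        exact P.add_mem hf hg
      smul_mem' := fun r f hf => by
        simp only [Set.mem_setOf_eq, smul_eq_mul, map_mul] at *
        exact P.mul_mem_left _ _ hf } with hJ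
  have hJmem : ∀ f, f ∈ J ↔ Polynomial.aeval (qpY k q) f ∈ P := fun _ => Iff.rfl
  have hJprime : J.IsPrime := by
    constructor
    · intro htop
      have h1 : (1 : Polynomial k) ∈ J := htop ▸ trivial
      rw [hJmem, map_one] at h1
      exact hP.1 (TwoSidedIdeal.one_mem_iff P |>.mp h1)
    · intro f g hfg
      rw [hJmem, map_mul] at hfg
      refine hP.2 _ _ fun r => ?_
      have hdecomp : r = (r - Polynomial.aeval (qpY k q) (piY q r))
          + Polynomial.aeval (qpY k q) (piY q r) := by abel
      rw [hdecomp, mul_add, add_mul]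
      refine P.add_mem ?_ ?_
      · exact P.mul_mem_right _ _ (P.mul_mem_left _ _ (hXle _ (sub_piY_mem r)))
      · have : Polynomial.aeval (qpY k q) f * Polynomial.aeval (qpY k q) (piY q r)
            * Polynomial.aeval (qpY k q) g
            = (Polynomial.aeval (qpY k q) f * Polynomial.aeval (qpY k q) g)
              * Polynomial.aeval (qpY k q) (piY q r) := by
          rw [← map_mul, ← map_mul, ← map_mul, ← map_mul]
          congr 1
          ring
        rw [this]
        exact P.mul_mem_right _ _ hfg
  rcases classify_poly_prime J hJprime with hbot | ⟨β, hβ⟩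
  · left
    apply SetLike.ext
    intro a
    rw [hmemiff a, ← hJmem, hbot, mem_span_X_iff]
    exact Ideal.mem_bot
  · right
    refine ⟨β, ?_⟩
    have heps : ∀ a : QuantumPlane k q, epsB q β a = Polynomial.aeval β (piY q a) := by
      intro a
      have : epsB q β = (Polynomial.aeval β).comp (piY q) := by
        apply qp_algHom_ext
        · rw [AlgHom.comp_apply]
          have h1 : piY q (qpX k q) = 0 := qpLift_X _ _ _
          have h2 : epsB q β (qpX k q) = 0 := qpLift_X _ _ _
          rw [h1, h2, map_zero]
        · rw [AlgHom.comp_apply]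
          have h1 : piY q (qpY k q) = Polynomial.X := qpLift_Y _ _ _
          have h2 : epsB q β (qpY k q) = β := qpLift_Y _ _ _
          rw [h1, h2, Polynomial.aeval_X]
      rw [this]
      rfl
    apply SetLike.ext
    intro a
    rw [hmemiff a, ← hJmem, hβ, mem_span_XB_iff, heps, Ideal.mem_span_singleton]
    rw [Polynomial.dvd_iff_isRoot, Polynomial.IsRoot, ← Polynomial.coe_aeval_eq_eval]

theorem case_Y_mem [IsAlgClosed k] {P : TwoSidedIdeal (QuantumPlane k q)} (hP : P.IsPrimeTS)
    (hyP : qpY k q ∈ P) :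
    P = span {qpY k q} ∨
      ∃ α : k, P = span {qpX k q - algebraMap k (QuantumPlane k q) α, qpY k q} := by
  have hXle : ∀ a, a ∈ span ({qpY k q} : Set (QuantumPlane k q)) → a ∈ P := by
    intro a ha
    refine span_mem_of_subset ?_ ha
    intro z hz
    rw [Set.mem_singleton_iff] at hz
    subst hz
    exact hyP
  have hmemiff : ∀ a : QuantumPlane k q,
      a ∈ P ↔ Polynomial.aeval (qpX k q) (piX q a) ∈ P := by
    intro a
    have hsub := sub_piX_mem (q := q) a
    constructor
    · intro ha
      have : Polynomial.aeval (qpX k q) (piX q a)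
          = a - (a - Polynomial.aeval (qpX k q) (piX q a)) := by abel
      rw [this]
      exact P.sub_mem ha (hXle _ hsub)
    · intro ha
      have : a = (a - Polynomial.aeval (qpX k q) (piX q a))
          + Polynomial.aeval (qpX k q) (piX q a) := by abel
      rw [this]
      exact P.add_mem (hXle _ hsub) ha
  set J : Ideal (Polynomial k) :=
    { carrier := {f | Polynomial.aeval (qpX k q) f ∈ P}
      zero_mem' := by simp only [Set.mem_setOf_eq, map_zero]; exact P.zero_mem
      add_mem' := fun hf hg => by
        simp only [Set.mem_setOf_eq, map_add] at *
        exact P.add_mem hf hg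
      smul_mem' := fun r f hf => by
        simp only [Set.mem_setOf_eq, smul_eq_mul, map_mul] at *
        exact P.mul_mem_left _ _ hf } with hJ
  have hJmem : ∀ f, f ∈ J ↔ Polynomial.aeval (qpX k q) f ∈ P := fun _ => Iff.rfl
  have hJprime : J.IsPrime := by
    constructor
    · intro htop
      have h1 : (1 : Polynomial k) ∈ J := htop ▸ trivial
      rw [hJmem, map_one] at h1
      exact hP.1 (TwoSidedIdeal.one_mem_iff P |>.mp h1)
    · intro f g hfg
      rw [hJmem, map_mul] at hfg
      refine hP.2 _ _ fun r => ?_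
      have hdecomp : r = (r - Polynomial.aeval (qpX k q) (piX q r))
          + Polynomial.aeval (qpX k q) (piX q r) := by abel
      rw [hdecomp, mul_add, add_mul]
      refine P.add_mem ?_ ?_
      · exact P.mul_mem_right _ _ (P.mul_mem_left _ _ (hXle _ (sub_piX_mem r)))
      · have : Polynomial.aeval (qpX k q) f * Polynomial.aeval (qpX k q) (piX q r)
            * Polynomial.aeval (qpX k q) g
            = (Polynomial.aeval (qpX k q) f * Polynomial.aeval (qpX k q) g)
              * Polynomial.aeval (qpX k q) (piX q r) := by
          rw [← map_mul, ← map_mul, ← map_mul, ← map_mul]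
          congr 1
          ring
        rw [this]
        exact P.mul_mem_right _ _ hfg
  rcases classify_poly_prime J hJprime with hbot | ⟨α, hα⟩
  · left
    apply SetLike.ext
    intro a
    rw [hmemiff a, ← hJmem, hbot, mem_span_Y_iff]
    exact Ideal.mem_bot
  · right
    refine ⟨α, ?_⟩
    have heps : ∀ a : QuantumPlane k q, epsA q α a = Polynomial.aeval α (piX q a) := by
      intro a
      have : epsA q α = (Polynomial.aeval α).comp (piX q) := by
        apply qp_algHom_ext
        · rw [AlgHom.comp_apply]
          have h1 : piX q (qpX k q) = Polynomial.X := qpLift_X _ _ _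
          have h2 : epsA q α (qpX k q) = α := qpLift_X _ _ _
          rw [h1, h2, Polynomial.aeval_X]
        · rw [AlgHom.comp_apply]
          have h1 : piX q (qpY k q) = 0 := qpLift_Y _ _ _
          have h2 : epsA q α (qpY k q) = 0 := qpLift_Y _ _ _
          rw [h1, h2, map_zero]
      rw [this]
      rfl
    apply SetLike.ext
    intro a
    rw [hmemiff a, ← hJmem, hα, mem_span_AY_iff, heps, Ideal.mem_span_singleton]
    rw [Polynomial.dvd_iff_isRoot, Polynomial.IsRoot, ← Polynomial.coe_aeval_eq_eval]

end QPaux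


open QPaux

/-- For `q` not a root of unity over an algebraically closed field, the prime (two-sided)
ideals of the quantum plane are exactly `⟨0⟩`, `⟨x⟩`, `⟨y⟩`, `⟨x, y - β⟩` for `β ∈ k`,
and `⟨x - α, y⟩` for `α ∈ k`. -/
theorem quantumPlane_prime_spectrum {k : Type*} [Field k] [IsAlgClosed k] (q : k)
    (hq0 : q ≠ 0) (hq : ∀ n : ℕ, 0 < n → q ^ n ≠ 1) (P : TwoSidedIdeal (QuantumPlane k q)) :
    P.IsPrimeTS ↔
      P = ⊥ ∨
      P = TwoSidedIdeal.span {qpX k q} ∨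
      P = TwoSidedIdeal.span {qpY k q} ∨
      (∃ β : k, P = TwoSidedIdeal.span
        {qpX k q, qpY k q - algebraMap k (QuantumPlane k q) β}) ∨
      (∃ α : k, P = TwoSidedIdeal.span
        {qpX k q - algebraMap k (QuantumPlane k q) α, qpY k q}) := by
  constructor
  · intro hP
    by_cases hxP : qpX k q ∈ P
    · rcases case_X_mem hP hxP with h | ⟨β, h⟩
      · exact Or.inr (Or.inl h)
      · exact Or.inr (Or.inr (Or.inr (Or.inl ⟨β, h⟩)))
    by_cases hyP : qpY k q ∈ P
    · rcases case_Y_mem hP hyP with h | ⟨α, h⟩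
      · exact Or.inr (Or.inr (Or.inl h))
      · exact Or.inr (Or.inr (Or.inr (Or.inr ⟨α, h⟩)))
    · exact Or.inl (eq_bot_of_not_mem hP hq0 hq hxP hyP)
  · rintro (rfl | rfl | rfl | ⟨β, rfl⟩ | ⟨α, rfl⟩)
    · exact isPrime_bot hq0
    · exact isPrime_span_X
    · exact isPrime_span_Y
    · exact isPrime_span_XB β
    · exact isPrime_span_AY α
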